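/- Let f : ℝ → ℝ be continuous on [-1, 1]. If f(-1), f(0), and f(1) are integers and f(1) - f(-1) is an even integer, then f is uniformly approximable on [-1, 1] by polynomials with integer coefficients. -/

import Mathlib

open Finset Polynomial Filter

lemma geom_tail {t : ℝ} (ht0 : 0 < t) (ht1 : t < 1) (d : ℕ) :
    ∑ a ∈ Ico 1 d, t ^ a ≤ t / (1 - t) := by
  have h1 : (0:ℝ) < 1 - t := by linarith
  have : ∑ a ∈ Ico 1 d, t ^ a = t * ∑ k ∈ range (d - 1), t ^ k := by
    rw [Finset.sum_Ico_eq_sum_range, Finset.mul_sum]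
    exact Finset.sum_congr rfl fun k _ => by ring
  rw [this, geom_sum_eq (by linarith : t ≠ 1)]
  have hA : (t^(d-1) - 1)/(t-1) = (1 - t^(d-1))/(1-t) := by
    rw [div_eq_div_iff (by linarith) (by linarith)]; ring
  rw [hA, div_eq_mul_inv, div_eq_mul_inv, ← mul_assoc]
  have : t * (1 - t^(d-1)) ≤ t := by nlinarith [pow_nonneg ht0.le (d-1)]
  exact mul_le_mul_of_nonneg_right this (by positivity)

lemma small_all {ε : ℝ} (hε : 0 < ε) :
    ∃ t : ℝ, 0 < t ∧ t < 1 ∧ ∃ D : ℕ, ∀ d ≥ D,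
      t + (1 - t^2)^d + ∑ a ∈ Ico 1 d, (t ^ min a (d - a) + (1-t) ^ max a (d - a)) ≤ ε := by
  set t := min (1/2) (ε/8) with hts
  have ht0 : 0 < t := lt_min (by norm_num) (by linarith)
  have ht2 : t ≤ 1/2 := min_le_left _ _
  have ht8 : t ≤ ε/8 := min_le_right _ _
  have ht1 : t < 1 := lt_of_le_of_lt ht2 (by norm_num)
  have h1t : 0 < 1 - t := by linarith
  have h1t1 : 1 - t < 1 := by linarith
  have h1t2 : 0 ≤ 1 - t^2 := by nlinarith
  have h1t2' : 1 - t^2 < 1 := by nlinarith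
  -- eventual smallness of (2k+1)(1-t)^k and (1-t^2)^d
  have T1 : Tendsto (fun k : ℕ => (2*(k:ℝ)+1) * (1-t)^k) atTop (nhds 0) := by
    have h := tendsto_self_mul_const_pow_of_lt_one h1t.le h1t1
    have h2 := tendsto_pow_atTop_nhds_zero_of_lt_one h1t.le h1t1
    have := ((h.const_mul 2).add h2)
    simpa [mul_assoc, add_mul, mul_comm, mul_left_comm] using this
  have T2 : Tendsto (fun d : ℕ => (1 - t^2)^d) atTop (nhds 0) :=
    tendsto_pow_atTop_nhds_zero_of_lt_one h1t2 h1t2'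
  obtain ⟨K, hK⟩ := (Filter.eventually_atTop).1 (T1.eventually (eventually_le_nhds (show (0:ℝ) < ε/4 by linarith)))
  obtain ⟨D2, hD2⟩ := (Filter.eventually_atTop).1 (T2.eventually (eventually_le_nhds (show (0:ℝ) < ε/8 by linarith)))
  refine ⟨t, ht0, ht1, max (2*K) D2, fun d hd => ?_⟩
  have hdK : K ≤ d / 2 := by
    have := le_trans (le_max_left (2*K) D2) hd; omega
  have hd2 : D2 ≤ d := le_trans (le_max_right _ _) hd
  -- bound the sum
  have hsum : ∑ a ∈ Ico 1 d, (t ^ min a (d - a) + (1-t) ^ max a (d - a))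
      ≤ (∑ a ∈ Ico 1 d, (t ^ a + t ^ (d - a))) + (d:ℝ) * (1-t)^(d/2) := by
    rw [Finset.sum_add_distrib]
    apply add_le_add
    · apply Finset.sum_le_sum
      intro a ha
      rcases min_choice a (d - a) with h | h <;> rw [h]
      · nlinarith [pow_nonneg ht0.le (d - a), pow_nonneg ht0.le a]
      · nlinarith [pow_nonneg ht0.le (d - a), pow_nonneg ht0.le a]
    · calc ∑ a ∈ Ico 1 d, (1-t) ^ max a (d - a)
          ≤ ∑ a ∈ Ico 1 d, (1-t)^(d/2) := by
            apply Finset.sum_le_sum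
            intro a ha
            apply pow_le_pow_of_le_one h1t.le h1t1.le
            simp only [Finset.mem_Ico] at ha; omega
        _ ≤ (d:ℝ) * (1-t)^(d/2) := by
            rw [Finset.sum_const, nsmul_eq_mul]
            have : ((Ico 1 d).card : ℝ) ≤ (d:ℝ) := by
              exact_mod_cast (by rw [Nat.card_Ico]; omega : (Ico 1 d).card ≤ d)
            nlinarith [pow_nonneg h1t.le (d/2)]
  have hrev : ∑ a ∈ Ico 1 d, t ^ (d - a) = ∑ a ∈ Ico 1 d, t ^ a := by
    apply Finset.sum_nbij' (fun a => d - a) (fun a => d - a) <;>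
      intros a ha <;> simp only [Finset.mem_Ico] at * <;> first | omega | rfl | (congr 1; omega)
  have hgeo : ∑ a ∈ Ico 1 d, (t ^ a + t ^ (d - a)) ≤ 4 * t := by
    rw [Finset.sum_add_distrib, hrev]
    have := geom_tail ht0 ht1 d
    have h2 : t / (1-t) ≤ 2*t := by rw [div_le_iff₀ h1t]; nlinarith
    linarith
  have hdh : (d:ℝ) * (1-t)^(d/2) ≤ ε/4 := by
    have := hK (d/2) hdK
    have hle : (d:ℝ) ≤ 2*((d/2 : ℕ):ℝ)+1 := by exact_mod_cast (by omega : d ≤ 2*(d/2)+1)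
    nlinarith [pow_nonneg h1t.le (d/2)]
  have := hD2 d hd2
  linarith [hsum, hgeo]

/-- pointwise: u^a (1-u)^b ≤ t^(min a b) + (1-t)^(max a b) for u,t ∈ [0,1] -/
lemma split_bound {u t : ℝ} (hu0 : 0 ≤ u) (hu1 : u ≤ 1) (ht0 : 0 ≤ t) (ht1 : t ≤ 1)
    (a b : ℕ) : u ^ a * (1 - u) ^ b ≤ t ^ min a b + (1 - t) ^ max a b := by
  have h1u : 0 ≤ 1 - u := by linarith
  have h1t : 0 ≤ 1 - t := by linarith
  rcases le_total a b with hab | hab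
  · rw [min_eq_left hab, max_eq_right hab]
    rcases le_total u t with h | h
    · have : u ^ a * (1-u) ^ b ≤ t ^ a := by
        calc u ^ a * (1-u) ^ b ≤ u ^ a * 1 := by
              exact mul_le_mul_of_nonneg_left (pow_le_one₀ h1u (by linarith)) (pow_nonneg hu0 a)
          _ = u ^ a := by ring
          _ ≤ t ^ a := pow_le_pow_left₀ hu0 h a
      nlinarith [pow_nonneg h1t b]
    · have : u ^ a * (1-u) ^ b ≤ (1-t) ^ b := by
        calc u ^ a * (1-u) ^ b ≤ 1 * (1-u) ^ b := by
              exact mul_le_mul_of_nonneg_right (pow_le_one₀ hu0 hu1) (pow_nonneg h1u b)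
          _ = (1-u) ^ b := by ring
          _ ≤ (1-t) ^ b := pow_le_pow_left₀ h1u (by linarith) b
      nlinarith [pow_nonneg ht0 a]
  · rw [min_eq_right hab, max_eq_left hab]
    rcases le_total u (1 - t) with h | h
    · have : u ^ a * (1-u) ^ b ≤ (1-t) ^ a := by
        calc u ^ a * (1-u) ^ b ≤ u ^ a * 1 := by
              exact mul_le_mul_of_nonneg_left (pow_le_one₀ h1u (by linarith)) (pow_nonneg hu0 a)
          _ = u ^ a := by ring
          _ ≤ (1-t) ^ a := pow_le_pow_left₀ hu0 h a
      nlinarith [pow_nonneg ht0 b]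
    · have : u ^ a * (1-u) ^ b ≤ t ^ b := by
        calc u ^ a * (1-u) ^ b ≤ 1 * (1-u) ^ b := by
              exact mul_le_mul_of_nonneg_right (pow_le_one₀ hu0 hu1) (pow_nonneg h1u b)
          _ = (1-u) ^ b := by ring
          _ ≤ t ^ b := pow_le_pow_left₀ h1u (by linarith) b
      nlinarith [pow_nonneg h1t a]

/-- Bernstein-type expansion of a polynomial, at the level of evaluations. -/
lemma bern_expand (ρ : Polynomial ℝ) (m : ℕ) (hm : ρ.natDegree < m + 1) (x : ℝ) :
    ρ.eval x = ∑ j ∈ range (m+1),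
      (∑ i ∈ range (j+1), ρ.coeff i * ((m-i).choose (j-i))) * (x ^ j * (1-x) ^ (m-j)) := by
  have swap : ∑ j ∈ range (m+1), ∑ i ∈ range (j+1),
        (ρ.coeff i * ((m-i).choose (j-i))) * (x ^ j * (1-x) ^ (m-j))
      = ∑ i ∈ range (m+1), ∑ j ∈ Ico i (m+1),
        (ρ.coeff i * ((m-i).choose (j-i))) * (x ^ j * (1-x) ^ (m-j)) := by
    apply Finset.sum_comm'
    intro j i
    simp only [Finset.mem_range, Finset.mem_Ico]
    omega
  have inner : ∀ i ∈ range (m+1), ∑ j ∈ Ico i (m+1),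
        (ρ.coeff i * ((m-i).choose (j-i))) * (x ^ j * (1-x) ^ (m-j)) = ρ.coeff i * x ^ i := by
    intro i hi
    simp only [Finset.mem_range] at hi
    rw [Finset.sum_Ico_eq_sum_range]
    have h1 : m + 1 - i = (m - i) + 1 := by omega
    rw [h1]
    have key : ∑ k ∈ range ((m-i)+1),
        (ρ.coeff i * ((m-i).choose ((i+k)-i))) * (x ^ (i+k) * (1-x) ^ (m-(i+k)))
        = ρ.coeff i * x ^ i * ∑ k ∈ range ((m-i)+1), x ^ k * (1-x) ^ ((m-i)-k) * ((m-i).choose k) := by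
      rw [Finset.mul_sum]
      apply Finset.sum_congr rfl
      intro k hk
      simp only [Finset.mem_range] at hk
      have h2 : (i+k) - i = k := by omega
      have h3 : m - (i+k) = (m-i) - k := by omega
      rw [h2, h3, pow_add]
      ring
    rw [key, ← add_pow]
    simp
  calc ρ.eval x = ∑ i ∈ range (m+1), ρ.coeff i * x ^ i := Polynomial.eval_eq_sum_range' hm x
    _ = ∑ i ∈ range (m+1), ∑ j ∈ Ico i (m+1),
        (ρ.coeff i * ((m-i).choose (j-i))) * (x ^ j * (1-x) ^ (m-j)) :=
      (Finset.sum_congr rfl inner).symm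
    _ = ∑ j ∈ range (m+1), ∑ i ∈ range (j+1),
        (ρ.coeff i * ((m-i).choose (j-i))) * (x ^ j * (1-x) ^ (m-j)) := swap.symm
    _ = _ := by
      apply Finset.sum_congr rfl
      intro j hj
      rw [Finset.sum_mul]

lemma approx01 (g : ℝ → ℝ) (hg : ContinuousOn g (Set.Icc (0:ℝ) 1)) (h0 : g 0 = 0)
    (h1 : g 1 = 0) {ε : ℝ} (hε : 0 < ε) :
    ∃ P : Polynomial ℤ, ∀ u ∈ Set.Icc (0:ℝ) 1, |g u - Polynomial.aeval u P| ≤ ε := by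
  obtain ⟨w, hw⟩ := exists_polynomial_near_of_continuousOn 0 1 g hg (ε/4) (by linarith)
  have hw0 : |w.eval 0| ≤ ε/4 := by
    have := hw 0 (by norm_num); rw [h0] at this; simpa using this.le
  have hw1 : |w.eval 1| ≤ ε/4 := by
    have := hw 1 (by norm_num); rw [h1] at this; simpa using this.le
  set wt : Polynomial ℝ := w - C (w.eval 0) * (1 - X) - C (w.eval 1) * X with hwt
  have hwteval : ∀ u : ℝ, wt.eval u = w.eval u - w.eval 0 * (1-u) - w.eval 1 * u := by
    intro u; simp [hwt]
  have hclose : ∀ u ∈ Set.Icc (0:ℝ) 1, |g u - wt.eval u| ≤ ε/2 := by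
    intro u hu
    obtain ⟨hu0, hu1⟩ := hu
    have h2 := hw u ⟨hu0, hu1⟩
    rw [hwteval]
    have habs : |w.eval 0 * (1-u) + w.eval 1 * u| ≤ ε/4 := by
      calc |w.eval 0 * (1-u) + w.eval 1 * u|
          ≤ |w.eval 0| * (1-u) + |w.eval 1| * u := by
            refine (abs_add_le _ _).trans ?_
            rw [abs_mul, abs_mul, abs_of_nonneg (by linarith : (0:ℝ) ≤ 1-u),
              abs_of_nonneg hu0]
        _ ≤ (ε/4) * (1-u) + (ε/4) * u := by
            apply add_le_add <;> apply mul_le_mul_of_nonneg_right <;> first | assumption | linarith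
        _ = ε/4 := by ring
    have := abs_sub_abs_le_abs_sub (g u - w.eval u) 0
    have h3 : |g u - w.eval u| ≤ ε/4 := by
      rw [abs_sub_comm] at h2; exact h2.le
    calc |g u - (w.eval u - w.eval 0 * (1-u) - w.eval 1 * u)|
        = |(g u - w.eval u) + (w.eval 0 * (1-u) + w.eval 1 * u)| := by ring_nf
      _ ≤ |g u - w.eval u| + |w.eval 0 * (1-u) + w.eval 1 * u| := abs_add_le _ _
      _ ≤ ε/4 + ε/4 := add_le_add h3 habs
      _ = ε/2 := by ring
  have hwt0 : wt.eval 0 = 0 := by simp [hwt]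
  have hwt1 : wt.eval 1 = 0 := by simp [hwt]
  -- factor wt = X * (X - 1) * τ'
  obtain ⟨q, hq⟩ : (X : Polynomial ℝ) ∣ wt := by
    rw [Polynomial.X_dvd_iff, Polynomial.coeff_zero_eq_eval_zero]; exact hwt0
  have hq1 : q.eval 1 = 0 := by
    have := hwt1; rw [hq] at this; simpa using this
  obtain ⟨τ', hτ'⟩ : (X - C (1:ℝ)) ∣ q := (Polynomial.dvd_iff_isRoot).2 hq1
  set ρ : Polynomial ℝ := -τ' with hρ
  have hfact : ∀ u : ℝ, wt.eval u = u * (1-u) * ρ.eval u := by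
    intro u
    rw [hq, hτ']
    simp [hρ]
    ring
  -- choose parameters
  obtain ⟨t, ht0, ht1, D, hD⟩ := small_all hε
  set m := max ρ.natDegree D with hm
  have hdeg : ρ.natDegree < m + 1 := by simp [hm]
  set β : ℕ → ℝ := fun j => ∑ i ∈ range (j+1), ρ.coeff i * ((m-i).choose (j-i)) with hβ
  set P : Polynomial ℤ :=
    ∑ j ∈ range (m+1), C (round (β j)) * (X^(j+1) * (1 - X)^(m+1-j)) with hP
  refine ⟨P, fun u hu => ?_⟩
  obtain ⟨hu0, hu1⟩ := hu
  have hPev : Polynomial.aeval u P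
      = ∑ j ∈ range (m+1), ((round (β j) : ℤ) : ℝ) * (u^(j+1) * (1-u)^(m+1-j)) := by
    rw [hP, map_sum]
    apply Finset.sum_congr rfl
    intro j hj
    simp
  have hwtev : wt.eval u = ∑ j ∈ range (m+1), β j * (u^(j+1) * (1-u)^(m+1-j)) := by
    rw [hfact, bern_expand ρ m hdeg u, Finset.mul_sum]
    apply Finset.sum_congr rfl
    intro j hj
    simp only [Finset.mem_range] at hj
    have h4 : m + 1 - j = (m - j) + 1 := by omega
    rw [h4, hβ]
    ring
  have hsum_small : ∑ a ∈ Ico 1 (m+2),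
      (t ^ min a ((m+2) - a) + (1-t) ^ max a ((m+2) - a)) ≤ ε := by
    have h5 := hD (m+2) (by omega)
    have h6 : (0:ℝ) ≤ (1 - t^2)^(m+2) := by nlinarith [pow_nonneg (by nlinarith : (0:ℝ) ≤ 1 - t^2) (m+2)]
    linarith
  have hdiff : |wt.eval u - Polynomial.aeval u P| ≤ ε/2 := by
    rw [hwtev, hPev, ← Finset.sum_sub_distrib]
    have step1 : ∀ j ∈ range (m+1),
        |β j * (u^(j+1) * (1-u)^(m+1-j)) - ((round (β j) : ℤ) : ℝ) * (u^(j+1) * (1-u)^(m+1-j))|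
        ≤ (1/2) * (t ^ min (j+1) ((m+2) - (j+1)) + (1-t) ^ max (j+1) ((m+2) - (j+1))) := by
      intro j hj
      have hb : m + 1 - j = (m+2) - (j+1) := by omega
      have hbase : (0:ℝ) ≤ u^(j+1) * (1-u)^(m+1-j) :=
        mul_nonneg (pow_nonneg hu0 _) (pow_nonneg (by linarith) _)
      have hr : |β j - ((round (β j) : ℤ) : ℝ)| ≤ 1/2 := abs_sub_round (β j)
      calc |β j * (u^(j+1) * (1-u)^(m+1-j)) - ((round (β j) : ℤ) : ℝ) * (u^(j+1) * (1-u)^(m+1-j))|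
          = |β j - ((round (β j) : ℤ) : ℝ)| * (u^(j+1) * (1-u)^(m+1-j)) := by
            rw [← sub_mul, abs_mul, abs_of_nonneg hbase]
        _ ≤ (1/2) * (u^(j+1) * (1-u)^(m+1-j)) := mul_le_mul_of_nonneg_right hr hbase
        _ ≤ (1/2) * (t ^ min (j+1) ((m+2) - (j+1)) + (1-t) ^ max (j+1) ((m+2) - (j+1))) := by
            rw [hb]
            exact mul_le_mul_of_nonneg_left
              (split_bound hu0 hu1 ht0.le ht1.le (j+1) ((m+2)-(j+1)) |>.trans_eq (by norm_num))
              (by norm_num)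
    calc |∑ j ∈ range (m+1), (β j * (u^(j+1) * (1-u)^(m+1-j))
            - ((round (β j) : ℤ) : ℝ) * (u^(j+1) * (1-u)^(m+1-j)))|
        ≤ ∑ j ∈ range (m+1), |β j * (u^(j+1) * (1-u)^(m+1-j))
            - ((round (β j) : ℤ) : ℝ) * (u^(j+1) * (1-u)^(m+1-j))| :=
          Finset.abs_sum_le_sum_abs _ _
      _ ≤ ∑ j ∈ range (m+1),
          (1/2) * (t ^ min (j+1) ((m+2) - (j+1)) + (1-t) ^ max (j+1) ((m+2) - (j+1))) :=
          Finset.sum_le_sum step1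
      _ = (1/2) * ∑ a ∈ Ico 1 (m+2), (t ^ min a ((m+2) - a) + (1-t) ^ max a ((m+2) - a)) := by
          rw [← Finset.mul_sum, Finset.sum_Ico_eq_sum_range]
          congr 1
          apply Finset.sum_congr (by norm_num)
          intro j hj
          rw [add_comm 1 j]
      _ ≤ (1/2) * ε := by linarith
      _ = ε/2 := by ring
  calc |g u - Polynomial.aeval u P|
      = |(g u - wt.eval u) + (wt.eval u - Polynomial.aeval u P)| := by ring_nf
    _ ≤ |g u - wt.eval u| + |wt.eval u - Polynomial.aeval u P| := abs_add_le _ _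
    _ ≤ ε/2 + ε/2 := add_le_add (hclose u ⟨hu0, hu1⟩) hdiff
    _ = ε := by ring

lemma even_part (g : ℝ → ℝ) (hg : ContinuousOn g (Set.Icc (-1:ℝ) 1))
    (heven : ∀ x, g (-x) = g x) (h0 : g 0 = 0) (h1 : g 1 = 0) {ε : ℝ} (hε : 0 < ε) :
    ∃ P : Polynomial ℤ, ∀ x ∈ Set.Icc (-1:ℝ) 1, |g x - Polynomial.aeval x P| ≤ ε := by
  set e : ℝ → ℝ := fun u => g (Real.sqrt u) with he
  have hecont : ContinuousOn e (Set.Icc (0:ℝ) 1) := by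
    apply hg.comp Real.continuous_sqrt.continuousOn
    intro u hu
    obtain ⟨hu0, hu1⟩ := hu
    constructor
    · linarith [Real.sqrt_nonneg u]
    · exact Real.sqrt_le_one.mpr hu1
  have he0 : e 0 = 0 := by simp [he, h0]
  have he1 : e 1 = 0 := by simp [he, h1]
  obtain ⟨P0, hP0⟩ := approx01 e hecont he0 he1 hε
  refine ⟨P0.comp (X^2), fun x hx => ?_⟩
  obtain ⟨hx0, hx1⟩ := hx
  have hx2 : x^2 ∈ Set.Icc (0:ℝ) 1 := ⟨sq_nonneg x, by nlinarith⟩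
  have h2 : Polynomial.aeval x (P0.comp (X^2)) = Polynomial.aeval (x^2) P0 := by
    simp [aeval_comp]
  have h3 : e (x^2) = g x := by
    rw [he]
    simp only
    rw [Real.sqrt_sq_eq_abs]
    rcases abs_choice x with h | h <;> rw [h]
    exact heven x
  rw [h2, ← h3]
  exact hP0 _ hx2

lemma sum_range_even_odd (f : ℕ → ℝ) (N : ℕ) :
    ∑ n ∈ range (2*N), f n = ∑ k ∈ range N, (f (2*k) + f (2*k+1)) := by
  induction N with
  | zero => simp
  | succ N ih =>
    have h : 2*(N+1) = (2*N + 1) + 1 := by omega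
    rw [h, Finset.sum_range_succ, Finset.sum_range_succ, ih, Finset.sum_range_succ, add_assoc]

lemma odd_part (g : ℝ → ℝ) (hg : ContinuousOn g (Set.Icc (-1:ℝ) 1))
    (hodd : ∀ x, g (-x) = - g x) (h1 : g 1 = 0) {ε : ℝ} (hε : 0 < ε) :
    ∃ P : Polynomial ℤ, ∀ x ∈ Set.Icc (-1:ℝ) 1, |g x - Polynomial.aeval x P| ≤ ε := by
  obtain ⟨w, hw⟩ := exists_polynomial_near_of_continuousOn (-1) 1 g hg (ε/8) (by linarith)
  set N := w.natDegree + 1 with hN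
  set ψ : Polynomial ℝ := ∑ k ∈ range N, C (w.coeff (2*k+1)) * X^k with hψ
  have hψev : ∀ y : ℝ, ψ.eval y = ∑ k ∈ range N, w.coeff (2*k+1) * y^k := by
    intro y; rw [hψ, Polynomial.eval_finset_sum]; simp
  have hkey : ∀ x : ℝ, x * ψ.eval (x^2) = (w.eval x - w.eval (-x))/2 := by
    intro x
    have hdeg2 : w.natDegree < 2*N := by omega
    have hx : w.eval x = ∑ n ∈ range (2*N), w.coeff n * x^n :=
      Polynomial.eval_eq_sum_range' hdeg2 x
    have hx' : w.eval (-x) = ∑ n ∈ range (2*N), w.coeff n * (-x)^n :=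
      Polynomial.eval_eq_sum_range' hdeg2 (-x)
    rw [hx, hx', ← Finset.sum_sub_distrib,
      sum_range_even_odd (fun n => w.coeff n * x^n - w.coeff n * (-x)^n) N,
      Finset.sum_div, hψev, Finset.mul_sum]
    apply Finset.sum_congr rfl
    intro k hk
    have e1 : (-x)^(2*k) = x^(2*k) := Even.neg_pow ⟨k, by omega⟩ x
    have e2 : (-x)^(2*k+1) = -(x^(2*k+1)) := Odd.neg_pow ⟨k, by omega⟩ x
    have e3 : (x^2)^k = x^(2*k) := (pow_mul x 2 k).symm
    rw [e1, e2, e3, pow_succ]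
    ring
  have hclose : ∀ x ∈ Set.Icc (-1:ℝ) 1, |g x - x * ψ.eval (x^2)| ≤ ε/8 := by
    intro x hx
    obtain ⟨hx0, hx1⟩ := hx
    have hxm : -x ∈ Set.Icc (-1:ℝ) 1 := ⟨by linarith, by linarith⟩
    have h2 := hw x ⟨hx0, hx1⟩
    have h3 := hw (-x) hxm
    rw [hkey]
    have hid : g x - (w.eval x - w.eval (-x))/2
        = ((g x - w.eval x) - (g (-x) - w.eval (-x)))/2 := by
      rw [hodd x]; ring
    rw [hid, abs_div, abs_two]
    have ha := abs_sub (g x - w.eval x) (g (-x) - w.eval (-x))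
    have h2' : |g x - w.eval x| ≤ ε/8 := by rw [abs_sub_comm]; exact h2.le
    have h3' : |g (-x) - w.eval (-x)| ≤ ε/8 := by rw [abs_sub_comm]; exact h3.le
    linarith
  -- correct at 1
  have hc1 : |ψ.eval 1| ≤ ε/8 := by
    have := hclose 1 (by norm_num)
    simpa [h1] using this
  set ψ1 : Polynomial ℝ := ψ - C (ψ.eval 1) with hψ1
  have hψ1ev : ∀ y : ℝ, ψ1.eval y = ψ.eval y - ψ.eval 1 := by intro y; simp [hψ1]
  have hclose1 : ∀ x ∈ Set.Icc (-1:ℝ) 1, |g x - x * ψ1.eval (x^2)| ≤ ε/4 := by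
    intro x hx
    obtain ⟨hx0, hx1⟩ := hx
    have h2 := hclose x ⟨hx0, hx1⟩
    have hxabs : |x| ≤ 1 := abs_le.2 ⟨hx0, hx1⟩
    have : |x * ψ.eval 1| ≤ ε/8 := by
      rw [abs_mul]
      calc |x| * |ψ.eval 1| ≤ 1 * (ε/8) :=
            mul_le_mul hxabs hc1 (abs_nonneg _) zero_le_one
        _ = ε/8 := by ring
    calc |g x - x * ψ1.eval (x^2)|
        = |(g x - x * ψ.eval (x^2)) + x * ψ.eval 1| := by rw [hψ1ev]; ring_nf
      _ ≤ |g x - x * ψ.eval (x^2)| + |x * ψ.eval 1| := abs_add_le _ _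
      _ ≤ ε/8 + ε/8 := add_le_add h2 this
      _ = ε/4 := by ring
  have hψ11 : ψ1.eval 1 = 0 := by rw [hψ1ev]; ring
  obtain ⟨τ', hτ'⟩ : (X - C (1:ℝ)) ∣ ψ1 := (Polynomial.dvd_iff_isRoot).2 hψ11
  set τ : Polynomial ℝ := -τ' with hτ
  have hfact : ∀ y : ℝ, ψ1.eval y = (1-y) * τ.eval y := by
    intro y; rw [hτ', hτ]; simp; ring
  -- rounding
  obtain ⟨t, ht0, ht1, D, hD⟩ := small_all hε
  set m := max τ.natDegree D with hm
  have hdeg : τ.natDegree < m + 1 := by simp [hm]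
  set β : ℕ → ℝ := fun j => ∑ i ∈ range (j+1), τ.coeff i * ((m-i).choose (j-i)) with hβ
  set P : Polynomial ℤ :=
    ∑ j ∈ range (m+1), C (round (β j)) * (X^(2*j+1) * (1 - X^2)^(m+1-j)) with hP
  refine ⟨P, fun x hx => ?_⟩
  obtain ⟨hx0, hx1⟩ := hx
  have hu0 : (0:ℝ) ≤ x^2 := sq_nonneg x
  have hu1 : x^2 ≤ 1 := by nlinarith
  have hxabs : |x| ≤ 1 := abs_le.2 ⟨hx0, hx1⟩
  have hPev : Polynomial.aeval x P
      = ∑ j ∈ range (m+1), ((round (β j) : ℤ) : ℝ) * (x^(2*j+1) * (1-x^2)^(m+1-j)) := by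
    rw [hP, map_sum]
    apply Finset.sum_congr rfl
    intro j hj
    simp
  have htarget : x * ψ1.eval (x^2)
      = ∑ j ∈ range (m+1), β j * (x^(2*j+1) * (1-x^2)^(m+1-j)) := by
    rw [hfact, bern_expand τ m hdeg (x^2), Finset.mul_sum, Finset.mul_sum]
    apply Finset.sum_congr rfl
    intro j hj
    simp only [Finset.mem_range] at hj
    have h4 : m + 1 - j = (m - j) + 1 := by omega
    have h5 : x^(2*j+1) = x * (x^2)^j := by
      rw [pow_succ, pow_mul]
      ring
    rw [h4, h5, hβ]
    ring
  have hsum_small : t + (1 - t^2)^(m+1) + ∑ a ∈ Ico 1 (m+1),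
      (t ^ min a ((m+1) - a) + (1-t) ^ max a ((m+1) - a)) ≤ ε := hD (m+1) (by omega)
  have h1u : (0:ℝ) ≤ 1 - x^2 := by linarith
  have hdiff : |x * ψ1.eval (x^2) - Polynomial.aeval x P| ≤ ε/2 := by
    rw [htarget, hPev, ← Finset.sum_sub_distrib]
    have hterm : ∀ j ∈ range (m+1),
        |β j * (x^(2*j+1) * (1-x^2)^(m+1-j))
          - ((round (β j) : ℤ) : ℝ) * (x^(2*j+1) * (1-x^2)^(m+1-j))|
          ≤ (1/2) * (|x| * ((x^2)^j * (1-x^2)^(m+1-j))) := by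
      intro j hj
      have hr : |β j - ((round (β j) : ℤ) : ℝ)| ≤ 1/2 := abs_sub_round (β j)
      have hxp : |x^(2*j+1)| = |x| * (x^2)^j := by
        rw [abs_pow, pow_succ, pow_mul, sq_abs]
        ring
      have hbase : |x^(2*j+1) * (1-x^2)^(m+1-j)| = |x| * ((x^2)^j * (1-x^2)^(m+1-j)) := by
        rw [abs_mul, hxp, abs_of_nonneg (pow_nonneg h1u _)]
        ring
      calc |β j * (x^(2*j+1) * (1-x^2)^(m+1-j))
            - ((round (β j) : ℤ) : ℝ) * (x^(2*j+1) * (1-x^2)^(m+1-j))|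
          = |β j - ((round (β j) : ℤ) : ℝ)| * |x^(2*j+1) * (1-x^2)^(m+1-j)| := by
            rw [← abs_mul]; congr 1; ring
        _ ≤ (1/2) * |x^(2*j+1) * (1-x^2)^(m+1-j)| :=
            mul_le_mul_of_nonneg_right hr (abs_nonneg _)
        _ = (1/2) * (|x| * ((x^2)^j * (1-x^2)^(m+1-j))) := by rw [hbase]
    have hFbound : ∑ j ∈ range (m+1), |x| * ((x^2)^j * (1-x^2)^(m+1-j))
        ≤ t + (1-t^2)^(m+1) + ∑ a ∈ Ico 1 (m+1),
          (t ^ min a ((m+1) - a) + (1-t) ^ max a ((m+1) - a)) := by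
      rw [Finset.range_eq_Ico, Finset.sum_eq_sum_Ico_succ_bot (by omega : 0 < m+1)]
      apply add_le_add
      · -- j = 0 term
        simp only [pow_zero, one_mul, Nat.sub_zero]
        rcases le_total |x| t with h | h
        · have hBle : (1-x^2)^(m+1) ≤ 1 := pow_le_one₀ h1u (by linarith)
          have hx0' : (0:ℝ) ≤ |x| := abs_nonneg x
          have h6 : (0:ℝ) ≤ (1-t^2)^(m+1) := pow_nonneg (by nlinarith) _
          have hBpos : (0:ℝ) ≤ (1-x^2)^(m+1) := pow_nonneg h1u _
          nlinarith
        · have ht2 : t^2 ≤ x^2 := by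
            have := sq_abs x
            nlinarith [abs_nonneg x]
          have h7 : (1-x^2)^(m+1) ≤ (1-t^2)^(m+1) :=
            pow_le_pow_left₀ h1u (by linarith) _
          have hBpos : (0:ℝ) ≤ (1-x^2)^(m+1) := pow_nonneg h1u _
          nlinarith
      · apply Finset.sum_le_sum
        intro a ha
        simp only [Finset.mem_Ico] at ha
        have hsb := split_bound hu0 hu1 ht0.le ht1.le a ((m+1) - a)
        have hb : (0:ℝ) ≤ (x^2)^a * (1-x^2)^((m+1)-a) :=
          mul_nonneg (pow_nonneg hu0 _) (pow_nonneg h1u _)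
        have hc : m + 1 - a = (m+1) - a := rfl
        calc |x| * ((x^2)^a * (1-x^2)^(m+1-a)) ≤ 1 * ((x^2)^a * (1-x^2)^(m+1-a)) :=
              mul_le_mul_of_nonneg_right hxabs hb
          _ = (x^2)^a * (1-x^2)^((m+1)-a) := by rw [one_mul]
          _ ≤ t ^ min a ((m+1) - a) + (1-t) ^ max a ((m+1) - a) := hsb
    calc |∑ j ∈ range (m+1), (β j * (x^(2*j+1) * (1-x^2)^(m+1-j))
            - ((round (β j) : ℤ) : ℝ) * (x^(2*j+1) * (1-x^2)^(m+1-j)))|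
        ≤ ∑ j ∈ range (m+1), |β j * (x^(2*j+1) * (1-x^2)^(m+1-j))
            - ((round (β j) : ℤ) : ℝ) * (x^(2*j+1) * (1-x^2)^(m+1-j))| :=
          Finset.abs_sum_le_sum_abs _ _
      _ ≤ ∑ j ∈ range (m+1), (1/2) * (|x| * ((x^2)^j * (1-x^2)^(m+1-j))) :=
          Finset.sum_le_sum hterm
      _ = (1/2) * ∑ j ∈ range (m+1), |x| * ((x^2)^j * (1-x^2)^(m+1-j)) := by
          rw [Finset.mul_sum]
      _ ≤ (1/2) * (t + (1-t^2)^(m+1) + ∑ a ∈ Ico 1 (m+1),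
            (t ^ min a ((m+1) - a) + (1-t) ^ max a ((m+1) - a))) := by
          apply mul_le_mul_of_nonneg_left hFbound (by norm_num)
      _ ≤ (1/2) * ε := mul_le_mul_of_nonneg_left hsum_small (by norm_num)
      _ = ε/2 := by ring
  calc |g x - Polynomial.aeval x P|
      = |(g x - x * ψ1.eval (x^2)) + (x * ψ1.eval (x^2) - Polynomial.aeval x P)| := by ring_nf
    _ ≤ |g x - x * ψ1.eval (x^2)| + |x * ψ1.eval (x^2) - Polynomial.aeval x P| := abs_add_le _ _
    _ ≤ ε/4 + ε/2 := add_le_add (hclose1 x ⟨hx0, hx1⟩) hdiff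
    _ ≤ ε := by linarith

theorem integer_poly_approx_sufficient_conditions (f : ℝ → ℝ)
    (hf : ContinuousOn f (Set.Icc (-1 : ℝ) 1))
    (hm1 : ∃ m : ℤ, f (-1) = m) (h0 : ∃ m : ℤ, f 0 = m) (h1 : ∃ m : ℤ, f 1 = m)
    (hparity : ∃ k : ℤ, f 1 - f (-1) = 2 * k) :
    ∀ ε : ℝ, ε > 0 → ∃ p : Polynomial ℤ,
      ∀ x ∈ Set.Icc (-1 : ℝ) 1, |f x - Polynomial.aeval x p| ≤ ε := by
  obtain ⟨a, ha⟩ := hm1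
  obtain ⟨b, hb⟩ := h0
  obtain ⟨c, hc⟩ := h1
  obtain ⟨k, hk⟩ := hparity
  intro ε hε
  set q : Polynomial ℤ := C b + C k * X + C (a + k - b) * X^2 with hq
  have hqev : ∀ x : ℝ, Polynomial.aeval x q
      = (b:ℝ) + (k:ℝ) * x + ((a:ℝ) + (k:ℝ) - (b:ℝ)) * x^2 := by
    intro x
    simp [hq]
  set g : ℝ → ℝ := fun x => f x - Polynomial.aeval x q with hg
  have hgc : ContinuousOn g (Set.Icc (-1:ℝ) 1) :=
    hf.sub (Polynomial.continuous_aeval q).continuousOn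
  have hca : (c:ℝ) - a = 2*k := by rw [← ha, ← hc]; exact_mod_cast hk
  have hg1 : g 1 = 0 := by
    simp only [hg, hqev, hc]
    push_cast
    nlinarith [hca]
  have hgm1 : g (-1) = 0 := by
    simp only [hg, hqev, ha]
    ring
  have hg0 : g 0 = 0 := by
    simp only [hg, hqev, hb]
    ring
  set gE : ℝ → ℝ := fun x => (g x + g (-x))/2 with hgE
  set gO : ℝ → ℝ := fun x => (g x - g (-x))/2 with hgO
  have hnegc : ContinuousOn (fun x => g (-x)) (Set.Icc (-1:ℝ) 1) := by
    apply hgc.comp continuous_neg.continuousOn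
    intro x hx
    simp only [Set.mem_Icc] at hx ⊢
    constructor <;> linarith [hx.1, hx.2]
  have hgEc : ContinuousOn gE (Set.Icc (-1:ℝ) 1) := (hgc.add hnegc).div_const 2
  have hgOc : ContinuousOn gO (Set.Icc (-1:ℝ) 1) := (hgc.sub hnegc).div_const 2
  have hgEe : ∀ x, gE (-x) = gE x := by intro x; simp [hgE, neg_neg]; ring
  have hgOo : ∀ x, gO (-x) = - gO x := by intro x; simp [hgO, neg_neg]; ring
  have hgE0 : gE 0 = 0 := by simp [hgE, hg0]
  have hgE1 : gE 1 = 0 := by simp [hgE, hg1, hgm1]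
  have hgO1 : gO 1 = 0 := by simp [hgO, hg1, hgm1]
  obtain ⟨PE, hPE⟩ := even_part gE hgEc hgEe hgE0 hgE1 (by linarith : (0:ℝ) < ε/2)
  obtain ⟨PO, hPO⟩ := odd_part gO hgOc hgOo hgO1 (by linarith : (0:ℝ) < ε/2)
  refine ⟨q + PE + PO, fun x hx => ?_⟩
  have hsplit : g x = gE x + gO x := by simp [hgE, hgO]; ring
  have hEO : Polynomial.aeval x (q + PE + PO)
      = Polynomial.aeval x q + Polynomial.aeval x PE + Polynomial.aeval x PO := by
    simp [map_add]
  calc |f x - Polynomial.aeval x (q + PE + PO)|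
      = |(gE x - Polynomial.aeval x PE) + (gO x - Polynomial.aeval x PO)| := by
        rw [hEO]
        have : f x - (Polynomial.aeval x q + Polynomial.aeval x PE + Polynomial.aeval x PO)
            = (g x - Polynomial.aeval x PE) - Polynomial.aeval x PO := by
          rw [hg]; ring
        rw [this, hsplit]; ring_nf
    _ ≤ |gE x - Polynomial.aeval x PE| + |gO x - Polynomial.aeval x PO| := abs_add_le _ _
    _ ≤ ε/2 + ε/2 := add_le_add (hPE x hx) (hPO x hx)
    _ = ε := by ring
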